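/- Let U be an uncountable subtree with countable levels of an ω₁-tree T, and let W be the downward closure of U in T. If b is a cofinal branch of W, then b ∩ U is uncountable; in particular U contains an uncountable chain. -/

import Mathlib

noncomputable section

open Cardinal

/-- The first uncountable ordinal. -/
def omegaOne : Ordinal := (Cardinal.aleph 1).ord

/-- A tree of height `ω₁`: a partial order in which the predecessors of every element form
a well-order, recorded by an ordinal-valued height function, with elements at every
countable height. -/
structure Tree1 where
  α : Type
  le : α → α → Prop
  le_refl : ∀ x, le x x
  le_antisymm : ∀ x y, le x y → le y x → x = y
  le_trans : ∀ x y z, le x y → le y z → le x z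
  ht : α → Ordinal
  ht_lt_omegaOne : ∀ x, ht x < omegaOne
  ht_strict : ∀ x y, le x y → x ≠ y → ht x < ht y
  pred_linear : ∀ x y z, le y x → le z x → (le y z ∨ le z y)
  pred_exists : ∀ x β, β < ht x → ∃ y, le y x ∧ ht y = β
  height_surj : ∀ β, β < omegaOne → ∃ x, ht x = β

namespace Tree1

variable (T : Tree1)

/-- Strict tree order. -/
def lt (x y : T.α) : Prop := T.le x y ∧ x ≠ y

def Incomp (x y : T.α) : Prop := ¬ T.le x y ∧ ¬ T.le y x

/-- A chain: a set of pairwise comparable elements. -/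
def Chain (C : Set T.α) : Prop := ∀ x ∈ C, ∀ y ∈ C, T.le x y ∨ T.le y x

/-- An antichain: a set of pairwise incomparable elements. -/
def Antichain (A : Set T.α) : Prop := ∀ x ∈ A, ∀ y ∈ A, x ≠ y → T.Incomp x y

/-- Level `β` of the tree. -/
def Level (β : Ordinal) : Set T.α := {x | T.ht x = β}

/-- An `ω₁`-tree has all levels countable. -/
def CountableLevels : Prop := ∀ β, (T.Level β).Countable

/-- Suslin: no uncountable chains and no uncountable antichains. -/
def Suslin : Prop :=
  (∀ C : Set T.α, T.Chain C → C.Countable) ∧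
  (∀ A : Set T.α, T.Antichain A → A.Countable)

def DownwardsClosed (W : Set T.α) : Prop := ∀ x y, T.le x y → y ∈ W → x ∈ W

/-- Normality: root, ≥ 2 immediate successors, unique limit nodes, successors at all
countable heights. -/
def Normal : Prop :=
  (∃ r, ∀ x, T.le r x) ∧
  (∀ x, ∃ y z : T.α, T.lt x y ∧ T.lt x z ∧ y ≠ z ∧
    T.ht y = T.ht x + 1 ∧ T.ht z = T.ht x + 1) ∧
  (∀ x y, T.ht x = T.ht y → Order.IsSuccLimit (T.ht x) → (∀ z, T.lt z x ↔ T.lt z y) → x = y) ∧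
  (∀ x β, T.ht x ≤ β → β < omegaOne → ∃ y, T.le x y ∧ T.ht y = β)

theorem lt_wf : WellFounded T.lt :=
  Subrelation.wf (fun {x y} h => T.ht_strict x y h.1 h.2) (InvImage.wf T.ht wellFounded_lt)

/-- The height of an element of a subtree `U ⊆ T` computed in the induced order. -/
def subHt (U : Set T.α) (x : U) : Ordinal :=
  @IsWellFounded.rank U (InvImage T.lt Subtype.val) ⟨InvImage.wf Subtype.val T.lt_wf⟩ x

/-- Levels of the subtree `U` (in the induced order) are countable. -/
def SubLevelsCountable (U : Set T.α) : Prop :=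
  ∀ β, {x : U | T.subHt U x = β}.Countable

/-- An Aronszajn subtree: an uncountable subset which, with the induced order, has countable
levels and no uncountable chain. -/
def AronszajnSubtree (U : Set T.α) : Prop :=
  ¬ U.Countable ∧ T.SubLevelsCountable U ∧ ∀ C ⊆ U, T.Chain C → C.Countable

/-- The downward closure of a set. -/
def DownwardClosure (U : Set T.α) : Set T.α := {x | ∃ y ∈ U, T.le x y}

/-- A cofinal branch: a downwards closed chain meeting every level. -/
def CofinalBranch (b : Set T.α) : Prop :=
  T.DownwardsClosed b ∧ T.Chain b ∧
    ∀ β, β < omegaOne → ∃ x ∈ b, T.ht x = β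

end Tree1

theorem aux_omegaOne_isLimit : Order.IsSuccLimit (omegaOne : Ordinal.{u}) :=
  Cardinal.isSuccLimit_ord Cardinal.isRegular_aleph_one.aleph0_le

theorem aux_omegaOne_cof : (omegaOne : Ordinal.{u}).cof = Cardinal.aleph 1 :=
  Cardinal.isRegular_aleph_one.cof_eq

theorem aux_Iio_countable {γ : Ordinal.{u}} (hγ : γ < omegaOne) : (Set.Iio γ).Countable := by
  rw [Cardinal.countable_iff_lt_aleph_one, Ordinal.mk_Iio_ordinal, Cardinal.lift_lt_aleph_one]
  exact Cardinal.lt_ord.mp hγ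

theorem aux_bdd {α : Type} {A : Set α} (hA : A.Countable) (f : α → Ordinal.{u})
    (hf : ∀ x, f x < omegaOne) : ∃ γ, γ < omegaOne ∧ ∀ x ∈ A, f x < γ := by
  haveI := hA.to_subtype
  refine ⟨⨆ x : A, Order.succ (f x.1), ?_, fun x hx => ?_⟩
  · refine Ordinal.iSup_lt_ord_lift ?_ fun x => aux_omegaOne_isLimit.succ_lt (hf x.1)
    rw [aux_omegaOne_cof]
    exact lt_of_le_of_lt (Cardinal.lift_le_aleph0.mpr Cardinal.mk_le_aleph0)
      Cardinal.aleph0_lt_aleph_one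
  · exact lt_of_lt_of_le (Order.lt_succ _)
      (Ordinal.le_iSup (fun x : A => Order.succ (f x.1)) ⟨x, hx⟩)

/-- if `U` is an uncountable subtree with countable levels of an `ω₁`-tree `T`,
`W` is its downward closure, and `b` is a cofinal branch of `W` (an uncountable chain of `W`,
downwards closed in `W`), then `b ∩ U` is uncountable; in particular `U` contains an
uncountable chain. -/
theorem rigidKurepa_stmt1 (T : Tree1) (hT : T.CountableLevels)
    (U : Set T.α) (hU1 : ¬ U.Countable) (hU2 : T.SubLevelsCountable U)
    (b : Set T.α) (hbW : b ⊆ T.DownwardClosure U) (hbchain : T.Chain b)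
    (hbdc : ∀ x y, x ∈ T.DownwardClosure U → T.le x y → y ∈ b → x ∈ b)
    (hbunc : ¬ b.Countable) :
    ¬ (b ∩ U).Countable ∧ ∃ C ⊆ U, T.Chain C ∧ ¬ C.Countable := by
  haveI instwf : IsWellFounded U (InvImage T.lt Subtype.val) :=
    ⟨InvImage.wf Subtype.val T.lt_wf⟩
  have htinj : ∀ x ∈ b, ∀ y ∈ b, T.ht x = T.ht y → x = y := by
    intro x hx y hy he
    by_contra hne
    rcases hbchain x hx y hy with h | h
    · exact absurd he (ne_of_lt (T.ht_strict x y h hne))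
    · exact absurd he.symm (ne_of_lt (T.ht_strict y x h (Ne.symm hne)))
  have hunb : ∀ γ, γ < omegaOne → ∃ x ∈ b, γ ≤ T.ht x := by
    intro γ hγ
    by_contra h
    push_neg at h
    exact hbunc ((Set.MapsTo.countable_of_injOn (fun x hx => h x hx)
      (fun x hx y hy he => htinj x hx y hy he)) (aux_Iio_countable hγ))
  have hD : ¬ (b ∩ U).Countable := by
    intro hDc
    -- subtree heights are countable ordinals
    have hsubHt_lt : ∀ x : U, T.subHt U x < omegaOne := by
      intro x
      refine IsWellFounded.induction (InvImage T.lt Subtype.val)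
        (motive := fun x => T.subHt U x < omegaOne) x ?_
      intro y IH
      have heq : T.subHt U y
          = ⨆ z : { z : U // InvImage T.lt Subtype.val z y }, Order.succ (T.subHt U z.1) :=
        IsWellFounded.rank_eq (InvImage T.lt Subtype.val) y
      have hpred : {z : U | InvImage T.lt Subtype.val z y}.Countable := by
        refine Set.MapsTo.countable_of_injOn (t := Set.Iio (T.ht y.1))
          (f := fun z : U => T.ht z.1) (fun z hz => T.ht_strict z.1 y.1 hz.1 hz.2)
          ?_ (aux_Iio_countable (T.ht_lt_omegaOne y.1))
        intro z1 hz1 z2 hz2 hzeq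
        have hcmp := T.pred_linear y.1 z1.1 z2.1 hz1.1 hz2.1
        have : z1.1 = z2.1 := by
          by_contra hne
          rcases hcmp with h | h
          · exact absurd hzeq (ne_of_lt (T.ht_strict z1.1 z2.1 h hne))
          · exact absurd hzeq.symm (ne_of_lt (T.ht_strict z2.1 z1.1 h (Ne.symm hne)))
        exact Subtype.ext this
      haveI : Countable { z : U // InvImage T.lt Subtype.val z y } := hpred.to_subtype
      rw [heq]
      refine Ordinal.iSup_lt_ord ?_ fun z => aux_omegaOne_isLimit.succ_lt (IH z.1 z.2)
      rw [aux_omegaOne_cof]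
      exact lt_of_le_of_lt Cardinal.mk_le_aleph0 Cardinal.aleph0_lt_aleph_one
    set Dsub : Set ↥U := Subtype.val ⁻¹' b with hDsubdef
    have hDsubc : Dsub.Countable :=
      Set.MapsTo.countable_of_injOn (t := b ∩ U) (fun x hx => ⟨hx, x.2⟩)
        (Set.injOn_of_injective Subtype.val_injective) hDc
    haveI := hDsubc.to_subtype
    set δ : Ordinal := ⨆ x : Dsub, Order.succ (T.subHt U x.1) with hδdef
    have hδlt : δ < omegaOne := by
      refine Ordinal.iSup_lt_ord ?_ fun x => aux_omegaOne_isLimit.succ_lt (hsubHt_lt x.1)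
      rw [aux_omegaOne_cof]
      exact lt_of_le_of_lt Cardinal.mk_le_aleph0 Cardinal.aleph0_lt_aleph_one
    -- above every element of b there is an element of U of small subtree height
    have key : ∀ γ, γ < omegaOne → ∃ u : U, T.subHt U u ≤ δ ∧ γ ≤ T.ht u.1 := by
      intro γ hγ
      obtain ⟨x, hxb, hγx⟩ := hunb γ hγ
      obtain ⟨u0, hu0U, hxu0⟩ := hbW hxb
      obtain ⟨m, hm, hmin⟩ :=
        T.lt_wf.has_min {w | w ∈ U ∧ T.le x w} ⟨u0, hu0U, hxu0⟩
      obtain ⟨hmU, hxm⟩ := hm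
      refine ⟨⟨m, hmU⟩, ?_, ?_⟩
      · have heq : T.subHt U ⟨m, hmU⟩
            = ⨆ z : { z : U // InvImage T.lt Subtype.val z ⟨m, hmU⟩ },
                Order.succ (T.subHt U z.1) :=
          IsWellFounded.rank_eq (InvImage T.lt Subtype.val) ⟨m, hmU⟩
        rw [heq]
        apply Ordinal.iSup_le
        rintro ⟨⟨w, hwU⟩, hw⟩
        have hwb : w ∈ b := by
          rcases T.pred_linear m w x hw.1 hxm with h | h
          · exact hbdc w x ⟨w, hwU, T.le_refl w⟩ h hxb
          · exact absurd hw (hmin w ⟨hwU, h⟩)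
        exact Ordinal.le_iSup (fun x : Dsub => Order.succ (T.subHt U x.1))
          (⟨⟨w, hwU⟩, hwb⟩ : Dsub)
      · rcases eq_or_ne x m with rfl | hne
        · exact hγx
        · exact hγx.trans (le_of_lt (T.ht_strict x m hxm hne))
    -- the set of elements of U of small subtree height is countable
    have hS : {x : U | T.subHt U x ≤ δ}.Countable := by
      have hsub : {x : U | T.subHt U x ≤ δ}
          ⊆ ⋃ β ∈ Set.Iio (Order.succ δ), {x : U | T.subHt U x = β} := by
        intro x hx
        exact Set.mem_biUnion (lt_of_le_of_lt hx (Order.lt_succ δ)) rfl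
      exact Set.Countable.mono hsub
        (Set.Countable.biUnion (aux_Iio_countable (aux_omegaOne_isLimit.succ_lt hδlt))
          (fun β _ => hU2 β))
    have hA : (Subtype.val '' {x : U | T.subHt U x ≤ δ}).Countable := hS.image _
    obtain ⟨γ0, hγ0, hbound⟩ := aux_bdd hA T.ht T.ht_lt_omegaOne
    obtain ⟨u, hu1, hu2⟩ := key γ0 hγ0
    exact absurd hu2 (not_le_of_gt (hbound u.1 ⟨u, hu1, rfl⟩))
  exact ⟨hD, b ∩ U, Set.inter_subset_right,
    fun x hx y hy => hbchain x hx.1 y hy.1, hD⟩
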